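/- If d(m) denotes the m-th Fourier coefficient of η(4z)⁶ = q∏_{n≥1}(1−q^{4n})⁶ = ∑_{m≥1} d(m) q^m, then for every non-negative integer n one has B₄(n) ≡ d(4n + 1) (mod 4). -/

import Mathlib

/-- Number of `l`-regular partitions of `n`: partitions none of whose parts is
divisible by `l`. -/
def numRegularPartitions (l n : ℕ) : ℕ :=
  (Finset.univ.filter (fun p : Nat.Partition n => ∀ x ∈ p.parts, ¬ l ∣ x)).card

/-- `B l n`: the number of `l`-regular bipartitions of `n`, i.e. ordered pairs
`(λ, μ)` of `l`-regular partitions the sum of whose parts equals `n`. -/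
def B (l n : ℕ) : ℕ :=
  ∑ ab ∈ Finset.HasAntidiagonal.antidiagonal n,
    numRegularPartitions l ab.1 * numRegularPartitions l ab.2

/-- `etaCoeff k e m` is the `m`-th Fourier coefficient of the eta-quotient expansion
`q ∏_{i ≥ 1} (1 - q^(k i))^e`.  Truncating the infinite product at `i = m` does not
change the coefficients of `q^j` for `j ≤ m`, so this is a faithful definition. -/
noncomputable def etaCoeff (k e m : ℕ) : ℤ :=
  PowerSeries.coeff (R := ℤ) m
    (PowerSeries.X * ∏ i ∈ Finset.Icc 1 m, (1 - PowerSeries.X ^ (k * i)) ^ e)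


open PowerSeries Finset
open scoped Classical

namespace Stmt19Aux

noncomputable section

variable {α : Type*}

/-- indicator power series of a set of naturals. -/
def indicatorSeries (α : Type*) [Semiring α] (s : Set ℕ) : PowerSeries α :=
  PowerSeries.mk fun n => if n ∈ s then 1 else 0

theorem coeff_indicator (s : Set ℕ) [Semiring α] (n : ℕ) :
    coeff (R := α) n (indicatorSeries _ s) = if n ∈ s then 1 else 0 :=
  coeff_mk _ _

-- The main workhorse (copied from the Archive's proof of Euler's partition theorem).
theorem partialGF_prop (α : Type*) [CommSemiring α] (n : ℕ) (s : Finset ℕ) (hs : ∀ i ∈ s, 0 < i)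
    (c : ℕ → Set ℕ) (hc : ∀ i, i ∉ s → 0 ∈ c i) :
    #{p : n.Partition | (∀ j, p.parts.count j ∈ c j) ∧ ∀ j ∈ p.parts, j ∈ s} =
      coeff (R := α) n (∏ i ∈ s, indicatorSeries α ((· * i) '' c i)) := by
  simp_rw [coeff_prod, coeff_indicator, prod_boole, sum_boole]
  apply congr_arg
  simp only [mem_univ, forall_true_left, not_and, not_forall, exists_prop,
    Set.mem_image, not_exists]
  set φ : (a : Nat.Partition n) →
    a ∈ filter (fun p ↦ (∀ (j : ℕ), Multiset.count j p.parts ∈ c j) ∧ ∀ j ∈ p.parts, j ∈ s) univ →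
    ℕ →₀ ℕ := fun p _ => {
      toFun := fun i => Multiset.count i p.parts • i
      support := Finset.filter (fun i => i ≠ 0) p.parts.toFinset
      mem_support_toFun := fun a => by
        simp only [smul_eq_mul, ne_eq, mul_eq_zero, Multiset.count_eq_zero]
        rw [not_or, not_not]
        simp only [Multiset.mem_toFinset, not_not, mem_filter] }
  refine Finset.card_bij φ ?_ ?_ ?_
  · intro a ha
    simp only [φ, not_forall, not_exists, not_and, exists_prop, mem_filter]
    rw [mem_finsuppAntidiag]
    dsimp only [ne_eq, smul_eq_mul, id_eq, eq_mpr_eq_cast, le_eq_subset, Finsupp.coe_mk]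
    simp only [mem_univ, forall_true_left, not_and, not_forall, exists_prop,
      mem_filter, true_and] at ha
    refine ⟨⟨?_, fun i ↦ ?_⟩, fun i _ ↦ ⟨a.parts.count i, ha.1 i, rfl⟩⟩
    · conv_rhs => simp [← a.parts_sum]
      rw [sum_multiset_count_of_subset _ s]
      · simp only [smul_eq_mul]
      · intro i
        simp only [Multiset.mem_toFinset, not_not, mem_filter]
        apply ha.2
    · simp only [ne_eq, Multiset.mem_toFinset, not_not, mem_filter, and_imp]
      exact fun hi _ ↦ ha.2 i hi
  · intro p₁ hp₁ p₂ hp₂ h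
    apply Nat.Partition.ext
    simp only [true_and, mem_univ, mem_filter] at hp₁ hp₂
    ext i
    simp only [φ, ne_eq, Multiset.mem_toFinset, not_not, smul_eq_mul, Finsupp.mk.injEq] at h
    by_cases hi : i = 0
    · rw [hi]
      rw [Multiset.count_eq_zero_of_notMem]
      · rw [Multiset.count_eq_zero_of_notMem]
        intro a; exact Nat.lt_irrefl 0 (hs 0 (hp₂.2 0 a))
      intro a; exact Nat.lt_irrefl 0 (hs 0 (hp₁.2 0 a))
    · rw [← mul_left_inj' hi]
      rw [funext_iff] at h
      exact h.2 i
  · simp only [φ, mem_filter, mem_finsuppAntidiag, mem_univ, exists_prop, true_and, and_assoc]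
    rintro f ⟨hf, hf₃, hf₄⟩
    have hf' : f ∈ finsuppAntidiag s n := mem_finsuppAntidiag.mpr ⟨hf, hf₃⟩
    simp only [mem_finsuppAntidiag] at hf'
    refine ⟨⟨∑ i ∈ s, Multiset.replicate (f i / i) i, ?_, ?_⟩, ?_, ?_, ?_⟩
    · intro i hi
      simp only [exists_prop, Multiset.mem_sum, mem_map, Function.Embedding.coeFn_mk] at hi
      rcases hi with ⟨t, ht, z⟩
      apply hs
      rwa [Multiset.eq_of_mem_replicate z]
    · simp_rw [Multiset.sum_sum, Multiset.sum_replicate, Nat.nsmul_eq_mul]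
      rw [← hf'.1]
      refine sum_congr rfl fun i hi => Nat.div_mul_cancel ?_
      rcases hf₄ i hi with ⟨w, _, hw₂⟩
      rw [← hw₂]
      exact dvd_mul_left _ _
    · intro i
      simp_rw [Multiset.count_sum', Multiset.count_replicate, sum_ite_eq']
      split_ifs with h
      · rcases hf₄ i h with ⟨w, hw₁, hw₂⟩
        rwa [← hw₂, Nat.mul_div_cancel _ (hs i h)]
      · exact hc _ h
    · intro i hi
      rw [Multiset.mem_sum] at hi
      rcases hi with ⟨j, hj₁, hj₂⟩
      rwa [Multiset.eq_of_mem_replicate hj₂]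
    · ext i
      simp_rw [Multiset.count_sum', Multiset.count_replicate, sum_ite_eq']
      simp only [ne_eq, Multiset.mem_toFinset, not_not, smul_eq_mul, ite_mul,
        zero_mul, Finsupp.coe_mk]
      split_ifs with h
      · apply Nat.div_mul_cancel
        rcases hf₄ i h with ⟨w, _, hw₂⟩
        apply Dvd.intro_left _ hw₂
      · apply symm
        rw [← Finsupp.notMem_support_iff]
        exact notMem_mono hf'.2 h

theorem ind_mul [CommRing α] {i : ℕ} (hi : 0 < i) :
    indicatorSeries α {k | i ∣ k} * (1 - X ^ i) = 1 := by
  ext m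
  rw [mul_sub, mul_one, map_sub, coeff_indicator, PowerSeries.coeff_mul_X_pow',
    PowerSeries.coeff_one]
  by_cases h1 : i ≤ m
  · have hm : m ≠ 0 := by omega
    rw [if_pos h1, coeff_indicator]
    have : i ∣ m ↔ i ∣ m - i := by
      constructor
      · intro h; exact (Nat.dvd_sub h dvd_rfl)
      · intro h
        have h' : i ∣ (m - i) + i := dvd_add h dvd_rfl
        rwa [Nat.sub_add_cancel h1] at h'
    simp only [Set.mem_setOf_eq, if_neg hm]
    by_cases h2 : i ∣ m
    · rw [if_pos h2, if_pos (this.mp h2), sub_self]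
    · rw [if_neg h2, if_neg (fun hc => h2 (this.mpr hc)), sub_self]
  · rw [if_neg h1, sub_zero]
    by_cases hm : m = 0
    · subst hm; simp
    · have : ¬ i ∣ m := fun hd => h1 (Nat.le_of_dvd (Nat.pos_of_ne_zero hm) hd)
      simp [this, hm]

theorem prod_sub_one_dvd [CommRing α] (s : Finset ℕ) (f : ℕ → PowerSeries α)
    (d : PowerSeries α) (h : ∀ i ∈ s, d ∣ f i - 1) : d ∣ (∏ i ∈ s, f i) - 1 := by
  induction s using Finset.cons_induction with
  | empty => simp
  | cons a s ha ih =>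
      rw [Finset.prod_cons]
      have h1 : d ∣ f a - 1 := h a (Finset.mem_cons_self a s)
      have h2 : d ∣ (∏ i ∈ s, f i) - 1 := ih fun i hi => h i (Finset.mem_cons.2 (Or.inr hi))
      have : f a * (∏ i ∈ s, f i) - 1
          = (f a - 1) * (∏ i ∈ s, f i) + ((∏ i ∈ s, f i) - 1) := by ring
      rw [this]
      exact dvd_add (Dvd.dvd.mul_right h1 _) h2

theorem coeff_eq_of_dvd [CommRing α] {n k : ℕ} {f g : PowerSeries α}
    (h : (X : PowerSeries α) ^ (n + 1) ∣ f - g) (hk : k ≤ n) :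
    coeff (R := α) k f = coeff (R := α) k g := by
  have := (PowerSeries.X_pow_dvd_iff.mp h) k (by omega)
  rw [map_sub, sub_eq_zero] at this
  exact this

theorem pow48 [CommRing α] (h4 : (4 : α) = 0) (Y : α) :
    (1 - Y) ^ 8 = (1 - Y ^ 4) ^ 2 := by
  linear_combination (-2*Y + 7*Y^2 - 14*Y^3 + 18*Y^4 - 14*Y^5 + 7*Y^6 - 2*Y^7) * h4

theorem one_sub_pow_sub_one_dvd [CommRing α] (a : α) (e : ℕ) : a ∣ (1 - a) ^ e - 1 := by
  have := sub_dvd_pow_sub_pow (1 - a) 1 e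
  rw [one_pow] at this
  have h2 : (1 - a) - 1 = -a := by ring
  rw [h2] at this
  exact (neg_dvd.mp (by exact this))


theorem numReg_coeff [CommSemiring α] (N a : ℕ) (ha : a ≤ N) :
    (numRegularPartitions 4 a : α) =
      coeff (R := α) a (∏ i ∈ (Ioc 0 N).filter (fun i => ¬ 4 ∣ i),
        indicatorSeries α {k | i ∣ k}) := by
  have hprop := partialGF_prop α a ((Ioc 0 N).filter (fun i => ¬ 4 ∣ i))
    (fun i hi => (Finset.mem_Ioc.mp (Finset.mem_filter.mp hi).1).1)
    (fun _ => Set.univ) (fun _ _ => trivial)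
  have himg : ∀ i : ℕ, ((· * i) '' Set.univ) = {k | i ∣ k} := by
    intro i
    ext k
    simp only [Set.image_univ, Set.mem_range, Set.mem_setOf_eq]
    constructor
    · rintro ⟨j, rfl⟩; exact Dvd.intro_left j rfl
    · rintro ⟨c, rfl⟩; exact ⟨c, mul_comm c i⟩
  simp_rw [himg] at hprop
  rw [← hprop]
  refine congrArg _ (congrArg Finset.card ?_)
  ext p
  simp only [Finset.mem_filter, Finset.mem_univ, true_and]
  constructor
  · intro h
    refine ⟨fun _ => trivial, fun j hj => ?_⟩
    refine ⟨Finset.mem_Ioc.mpr ⟨p.parts_pos hj, ?_⟩, h j hj⟩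
    calc j ≤ p.parts.sum := Multiset.single_le_sum (fun x _ => Nat.zero_le x) j hj
    _ = a := p.parts_sum
    _ ≤ N := ha
  · intro h j hj
    exact (h.2 j hj).2

theorem coeff_expand_bridge [CommRing α] (t : Finset ℕ) (n : ℕ) :
    coeff (R := α) (4 * n) (∏ i ∈ t, ((1 : PowerSeries α) - X ^ (4 * i)) ^ 6) =
      coeff (R := α) n (∏ i ∈ t, ((1 : PowerSeries α) - X ^ i) ^ 6) := by
  set p : Polynomial α := ∏ i ∈ t, (1 - Polynomial.X ^ i) ^ 6 with hp
  have h1 : ((p : Polynomial α) : PowerSeries α) = ∏ i ∈ t, ((1 : PowerSeries α) - X ^ i) ^ 6 := by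
    rw [hp, ← Polynomial.coeToPowerSeries.ringHom_apply, map_prod]
    refine Finset.prod_congr rfl fun i _ => ?_
    simp [map_pow, map_sub, map_one]
  have h2 : Polynomial.expand α 4 p = ∏ i ∈ t, ((1 : Polynomial α) - Polynomial.X ^ (4 * i)) ^ 6 := by
    rw [hp, map_prod]
    refine Finset.prod_congr rfl fun i _ => ?_
    rw [map_pow, map_sub, map_one, map_pow, Polynomial.expand_X, ← pow_mul]
  have h2' : ((Polynomial.expand α 4 p : Polynomial α) : PowerSeries α)
      = ∏ i ∈ t, ((1 : PowerSeries α) - X ^ (4 * i)) ^ 6 := by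
    rw [h2, ← Polynomial.coeToPowerSeries.ringHom_apply, map_prod]
    refine Finset.prod_congr rfl fun i _ => ?_
    simp [map_pow, map_sub, map_one]
  rw [← h1, ← h2', Polynomial.coeff_coe, Polynomial.coeff_coe,
    Polynomial.coeff_expand_mul' (by norm_num : 0 < 4)]


end
end Stmt19Aux

open Stmt19Aux

/-- Let `d m = etaCoeff 4 6 m` be the `m`-th Fourier coefficient of
`eta(4z)^6 = q prod_{n >= 1} (1 - q^(4 n))^6`.  Then `B 4 n = d (4 n + 1) (mod 4)`
for every `n >= 0`. -/

theorem stmt19 (n : ℕ) :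
    (B 4 n : ℤ) ≡ etaCoeff 4 6 (4 * n + 1) [ZMOD 4] := by
  have h4 : (4 : ZMod 4) = 0 := by decide
  have h4X : (4 : PowerSeries (ZMod 4)) = 0 := by
    rw [← map_ofNat (PowerSeries.C (R := ZMod 4)) 4, h4, map_zero]
  set R := ZMod 4
  set M := 4 * n + 1 with hM
  -- basic finsets and series
  set s1 := (Ioc 0 n).filter (fun i => ¬ 4 ∣ i) with hs1
  set s4 := (Ioc 0 n).filter (fun i => 4 ∣ i) with hs4
  set A := ∏ i ∈ s1, indicatorSeries R {k | i ∣ k} with hA_def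
  set V := ∏ i ∈ s4, indicatorSeries R {k | i ∣ k} with hV_def
  set Ws := ∏ i ∈ s1, (1 - (X : PowerSeries R) ^ i) with hWs
  set W4 := ∏ i ∈ s4, (1 - (X : PowerSeries R) ^ i) with hW4
  set W := ∏ i ∈ Ioc 0 n, (1 - (X : PowerSeries R) ^ i) with hW_def
  set E := ∏ i ∈ (Ioc 0 n).filter (fun i => ¬ 4 * i ≤ n),
      ((1 : PowerSeries R) - X ^ (4 * i)) ^ 2 with hE_def
  -- inverse relations
  have hA : A * Ws = 1 := by
    rw [hA_def, hWs, ← Finset.prod_mul_distrib]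
    refine Finset.prod_eq_one fun i hi => ?_
    exact ind_mul (Finset.mem_Ioc.mp (Finset.mem_filter.mp hi).1).1
  have hV : V * W4 = 1 := by
    rw [hV_def, hW4, ← Finset.prod_mul_distrib]
    refine Finset.prod_eq_one fun i hi => ?_
    exact ind_mul (Finset.mem_Ioc.mp (Finset.mem_filter.mp hi).1).1
  have hW : W4 * Ws = W := by
    rw [hW4, hWs, hW_def, hs4, hs1]
    exact Finset.prod_filter_mul_prod_filter_not _ _ _
  -- the mod-4 congruence W^8 = W4^2 * E (up to reindexing)
  have h8 : W ^ 8 = W4 ^ 2 * E := by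
    have step1 : W ^ 8 = ∏ i ∈ Ioc 0 n, ((1 : PowerSeries R) - X ^ (4 * i)) ^ 2 := by
      rw [hW_def, ← Finset.prod_pow]
      refine Finset.prod_congr rfl fun i _ => ?_
      rw [pow48 h4X ((X : PowerSeries R) ^ i), ← pow_mul']
    have step2 : (∏ i ∈ (Ioc 0 n).filter (fun i => 4 * i ≤ n),
        ((1 : PowerSeries R) - X ^ (4 * i)) ^ 2) = W4 ^ 2 := by
      rw [hW4, ← Finset.prod_pow]
      rw [hs4]
      refine Finset.prod_nbij' (fun i => 4 * i) (fun j => j / 4) ?_ ?_ ?_ ?_ ?_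
      · intro a ha
        simp only [Finset.mem_filter, Finset.mem_Ioc] at ha ⊢
        exact ⟨⟨by omega, by omega⟩, ⟨a, rfl⟩⟩
      · intro a ha
        simp only [Finset.mem_filter, Finset.mem_Ioc] at ha ⊢
        obtain ⟨⟨h1, h2⟩, c, rfl⟩ := ha
        exact ⟨by omega, by omega⟩
      · intro a _
        show 4 * a / 4 = a
        omega
      · intro a ha
        rw [Finset.mem_filter, Finset.mem_Ioc] at ha
        obtain ⟨⟨h1, h2⟩, c, rfl⟩ := ha
        show 4 * (4 * c / 4) = 4 * c
        omega
      · intro a _; rfl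
    rw [step1, ← Finset.prod_filter_mul_prod_filter_not (Ioc 0 n) (fun i => 4 * i ≤ n),
      step2, hE_def]
  have hE : (X : PowerSeries R) ^ (n + 1) ∣ E - 1 := by
    rw [hE_def]
    refine prod_sub_one_dvd _ _ _ fun i hi => ?_
    simp only [Finset.mem_filter, Finset.mem_Ioc] at hi
    exact dvd_trans (pow_dvd_pow X (by omega : n + 1 ≤ 4 * i))
      (one_sub_pow_sub_one_dvd ((X : PowerSeries R) ^ (4 * i)) 2)
  -- key: A^2 * E = W^6
  have hA2 : A ^ 2 * Ws ^ 2 = 1 := by rw [← mul_pow, hA, one_pow]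
  have hV2 : V ^ 2 * W4 ^ 2 = 1 := by rw [← mul_pow, hV, one_pow]
  have h3 : W4 ^ 8 * Ws ^ 8 = W4 ^ 2 * E := by rw [← mul_pow, hW, h8]
  have hkey : A ^ 2 * E = W ^ 6 := by
    rw [← hW]
    linear_combination (Ws^6 * W4^6 * V^2 * W4^2) * hA2 + (Ws^6 * W4^6 - A^2 * E) * hV2
      + (-(A^2) * V^2) * h3
  -- B side
  have hB : ((B 4 n : ℤ) : R) = coeff (R := R) n (A * A) := by
    rw [PowerSeries.coeff_mul]
    push_cast [B]
    rw [Int.cast_sum]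
    simp only [Int.cast_mul, Int.cast_natCast]
    refine Finset.sum_congr rfl fun (ab : ℕ × ℕ) hab => ?_
    have h := Finset.HasAntidiagonal.mem_antidiagonal.mp hab
    rw [numReg_coeff n ab.1 (by omega), numReg_coeff n ab.2 (by omega), hA_def, hs1]
  -- eta side
  have hEta : ((etaCoeff 4 6 M : ℤ) : R) = coeff (R := R) n (W ^ 6) := by
    rw [etaCoeff]
    have e1 : (((PowerSeries.coeff (R := ℤ) M)
        (PowerSeries.X * ∏ i ∈ Finset.Icc 1 M, (1 - PowerSeries.X ^ (4 * i)) ^ 6) : ℤ) : R)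
        = PowerSeries.coeff (R := R) M (PowerSeries.map (Int.castRingHom R)
          (PowerSeries.X * ∏ i ∈ Finset.Icc 1 M, (1 - PowerSeries.X ^ (4 * i)) ^ 6)) :=
      (PowerSeries.coeff_map (Int.castRingHom R) M _).symm
    rw [e1]
    have hmap : PowerSeries.map (Int.castRingHom R)
        (PowerSeries.X * ∏ i ∈ Finset.Icc 1 M, (1 - PowerSeries.X ^ (4 * i)) ^ 6)
        = PowerSeries.X * ∏ i ∈ Finset.Icc 1 M, (1 - (PowerSeries.X : PowerSeries R) ^ (4 * i)) ^ 6 := by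
      rw [map_mul, map_prod]
      simp [map_pow, map_sub, map_one]
    rw [hmap, hM, PowerSeries.coeff_succ_X_mul]
    have hIcc : Finset.Icc 1 M = Finset.Ioc 0 M := by
      ext x; simp [Finset.mem_Icc, Finset.mem_Ioc]; omega
    rw [hIcc, coeff_expand_bridge (Ioc 0 M) n]
    -- truncate from M down to n
    have hsplit : (∏ i ∈ Ioc 0 n, ((1 : PowerSeries R) - X ^ i) ^ 6)
        * (∏ i ∈ Ioc n M, ((1 : PowerSeries R) - X ^ i) ^ 6)
        = ∏ i ∈ Ioc 0 M, ((1 : PowerSeries R) - X ^ i) ^ 6 :=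
      Finset.prod_Ioc_consecutive _ (Nat.zero_le n) (by omega)
    rw [← hsplit]
    have hT : (X : PowerSeries R) ^ (n + 1) ∣
        (∏ i ∈ Ioc n M, ((1 : PowerSeries R) - X ^ i) ^ 6) - 1 := by
      refine prod_sub_one_dvd _ _ _ fun i hi => ?_
      simp only [Finset.mem_Ioc] at hi
      exact dvd_trans (pow_dvd_pow X (by omega : n + 1 ≤ i))
        (one_sub_pow_sub_one_dvd ((X : PowerSeries R) ^ i) 6)
    have : coeff (R := R) n ((∏ i ∈ Ioc 0 n, ((1 : PowerSeries R) - X ^ i) ^ 6)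
        * (∏ i ∈ Ioc n M, ((1 : PowerSeries R) - X ^ i) ^ 6))
        = coeff (R := R) n (∏ i ∈ Ioc 0 n, ((1 : PowerSeries R) - X ^ i) ^ 6) := by
      refine coeff_eq_of_dvd ?_ (le_refl n)
      have : (∏ i ∈ Ioc 0 n, ((1 : PowerSeries R) - X ^ i) ^ 6)
          * (∏ i ∈ Ioc n M, ((1 : PowerSeries R) - X ^ i) ^ 6)
          - (∏ i ∈ Ioc 0 n, ((1 : PowerSeries R) - X ^ i) ^ 6)
          = (∏ i ∈ Ioc 0 n, ((1 : PowerSeries R) - X ^ i) ^ 6)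
            * ((∏ i ∈ Ioc n M, ((1 : PowerSeries R) - X ^ i) ^ 6) - 1) := by ring
      rw [this]
      exact Dvd.dvd.mul_left hT _
    rw [this, hW_def, ← Finset.prod_pow]
  -- conclude
  have main : ((B 4 n : ℤ) : R) = ((etaCoeff 4 6 M : ℤ) : R) := by
    rw [hB, hEta]
    have step : coeff (R := R) n (A * A) = coeff (R := R) n (A ^ 2 * E) := by
      refine coeff_eq_of_dvd ?_ (le_refl n)
      have : A * A - A ^ 2 * E = -(A ^ 2 * (E - 1)) := by ring
      rw [this]
      exact dvd_neg.mpr (Dvd.dvd.mul_left hE _)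
    rw [step, hkey]
  have := (ZMod.intCast_eq_intCast_iff (B 4 n : ℤ) (etaCoeff 4 6 M) 4).mp main
  exact_mod_cast this
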